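/- Under the RU-QLP setup, for every i = 1,…,k, the sine of the angle between the i-th left singular vector u_i of A and the column space of Q satisfies ‖(I − QQ^T)u_i‖_2 ≤ δ_i^{2q+2} ‖Φ̂2 Φ̂1^†‖_2 / √(1 + γ^{4q+4} ‖Φ̂2 Φ̂1^†‖_2²). -/

import Mathlib

open Matrix MeasureTheory ProbabilityTheory

noncomputable section

/-- Euclidean norm of a vector. -/
noncomputable def vecNorm {a : ℕ} (v : Fin a → ℝ) : ℝ :=
  Real.sqrt (∑ i, v i ^ 2)

/-- Frobenius norm of a matrix. -/
noncomputable def frobNorm {a b : ℕ} (M : Matrix (Fin a) (Fin b) ℝ) : ℝ :=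
  Real.sqrt (∑ i, ∑ j, M i j ^ 2)

/-- Spectral norm (ℓ² operator norm) of a matrix. -/
noncomputable def specNorm {a b : ℕ} (M : Matrix (Fin a) (Fin b) ℝ) : ℝ :=
  ‖LinearMap.toContinuousLinearMap (Matrix.toEuclideanLin M)‖

/-- `mNorm true` is the spectral norm, `mNorm false` is the Frobenius norm. -/
noncomputable def mNorm (t : Bool) {a b : ℕ} (M : Matrix (Fin a) (Fin b) ℝ) : ℝ :=
  if t then specNorm M else frobNorm M

/-- The `i`-th largest singular value of a matrix (0-indexed, so `sval M 0` is the
largest singular value): the square root of the `i`-th largest eigenvalue of `MᵀM`. -/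
noncomputable def sval {a b : ℕ} (M : Matrix (Fin a) (Fin b) ℝ) (i : Fin b) : ℝ :=
  Real.sqrt ((show (Mᵀ * M).IsHermitian by
      simpa using Matrix.isHermitian_conjTranspose_mul_self M).eigenvalues
    (Tuple.sort (show (Mᵀ * M).IsHermitian by
      simpa using Matrix.isHermitian_conjTranspose_mul_self M).eigenvalues i.rev))

/-- The Moore–Penrose pseudoinverse of a full-row-rank matrix. -/
noncomputable def rowPinv {a b : ℕ} (M : Matrix (Fin a) (Fin b) ℝ) : Matrix (Fin b) (Fin a) ℝ :=
  Mᵀ * (M * Mᵀ)⁻¹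

/-- The constant ω = ω₁ω₂, ω₁ = √(m−k) + √(k+p) + 7, ω₂ = 4e√(k+p)/(p+1). -/
noncomputable def omegaConst (m k p : ℕ) : ℝ :=
  (Real.sqrt ((m : ℝ) - (k : ℝ)) + Real.sqrt ((k : ℝ) + (p : ℝ)) + 7) *
    (4 * Real.exp 1 * Real.sqrt ((k : ℝ) + (p : ℝ)) / ((p : ℝ) + 1))

/-- The constant C = √(k/(p−1)) + e√((m−k)(p+k))/p. -/
noncomputable def CConst (m k p : ℕ) : ℝ :=
  Real.sqrt ((k : ℝ) / ((p : ℝ) - 1)) +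
    Real.exp 1 * Real.sqrt (((m : ℝ) - (k : ℝ)) * ((p : ℝ) + (k : ℝ))) / (p : ℝ)

lemma vecNorm_eq {a : ℕ} (v : Fin a → ℝ) :
    vecNorm v = ‖(WithLp.equiv 2 (Fin a → ℝ)).symm v‖ := by
  rw [EuclideanSpace.norm_eq]
  simp [vecNorm, Real.norm_eq_abs, sq_abs]

lemma vecNorm_nonneg {a : ℕ} (v : Fin a → ℝ) : 0 ≤ vecNorm v := Real.sqrt_nonneg _

lemma vecNorm_mulVec_le {a b : ℕ} (M : Matrix (Fin a) (Fin b) ℝ) (x : Fin b → ℝ) :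
    vecNorm (M.mulVec x) ≤ specNorm M * vecNorm x := by
  rw [vecNorm_eq, vecNorm_eq]
  have := (LinearMap.toContinuousLinearMap (Matrix.toEuclideanLin M)).le_opNorm
    ((WithLp.equiv 2 (Fin b → ℝ)).symm x)
  exact this

lemma dot_mulVec_mulVec {a b c : ℕ} (M : Matrix (Fin a) (Fin b) ℝ)
    (N : Matrix (Fin a) (Fin c) ℝ) (x : Fin b → ℝ) (y : Fin c → ℝ) :
    (M.mulVec x) ⬝ᵥ (N.mulVec y) = x ⬝ᵥ ((Mᵀ * N).mulVec y) := by
  rw [← Matrix.mulVec_mulVec, Matrix.mulVec_transpose, dotProduct_comm,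
    Matrix.dotProduct_mulVec, dotProduct_comm]

lemma vecNorm_eq_dot {a : ℕ} (v : Fin a → ℝ) : vecNorm v = Real.sqrt (v ⬝ᵥ v) := by
  simp [vecNorm, dotProduct, sq]

lemma dot_self_nonneg {a : ℕ} (v : Fin a → ℝ) : 0 ≤ v ⬝ᵥ v :=
  Finset.sum_nonneg fun i _ => mul_self_nonneg _

lemma proj_le {m d : ℕ} (Q : Matrix (Fin m) (Fin d) ℝ) (hQ : Qᵀ * Q = 1)
    (u : Fin m → ℝ) (v : Fin d → ℝ) :
    vecNorm ((1 - Q * Qᵀ).mulVec u) ≤ vecNorm (u - Q.mulVec v) := by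
  set r := (1 - Q * Qᵀ).mulVec u with hr
  set s := Qᵀ.mulVec u - v with hs
  have hdecomp : u - Q.mulVec v = r + Q.mulVec s := by
    rw [hr, hs, Matrix.mulVec_sub, Matrix.sub_mulVec, Matrix.one_mulVec,
      Matrix.mulVec_mulVec]
    abel
  have horth : r ⬝ᵥ (Q.mulVec s) = 0 := by
    rw [hr, dot_mulVec_mulVec]
    have : (1 - Q * Qᵀ)ᵀ * Q = 0 := by
      rw [Matrix.transpose_sub, Matrix.transpose_one, Matrix.transpose_mul,
        Matrix.transpose_transpose, Matrix.sub_mul, Matrix.one_mul,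
        Matrix.mul_assoc, hQ, Matrix.mul_one, sub_self]
    rw [this, Matrix.zero_mulVec, dotProduct_zero]
  rw [hdecomp, vecNorm_eq_dot, vecNorm_eq_dot]
  apply Real.sqrt_le_sqrt
  have expand : (r + Q.mulVec s) ⬝ᵥ (r + Q.mulVec s)
      = r ⬝ᵥ r + 2 * (r ⬝ᵥ Q.mulVec s) + (Q.mulVec s) ⬝ᵥ (Q.mulVec s) := by
    simp [add_dotProduct, dotProduct_add, dotProduct_comm (Q.mulVec s) r]
    ring
  rw [expand, horth]
  have := dot_self_nonneg (Q.mulVec s)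
  linarith

lemma full_rank_mul_pinv {k d : ℕ} (M : Matrix (Fin k) (Fin d) ℝ) (h : M.rank = k) :
    M * (Mᵀ * (M * Mᵀ)⁻¹) = 1 := by
  have hrk : (M * Mᵀ).rank = k := by rw [Matrix.rank_self_mul_transpose, h]
  have hsurj : Function.Surjective (M * Mᵀ).mulVecLin := by
    rw [← LinearMap.range_eq_top]
    apply Submodule.eq_top_of_finrank_eq
    rw [← Matrix.rank, hrk]
    simp [Module.finrank_pi]
  have hinj : Function.Injective (M * Mᵀ).mulVecLin :=
    (LinearMap.injective_iff_surjective).mpr hsurj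
  have hdet : IsUnit (M * Mᵀ).det := by
    rw [isUnit_iff_ne_zero]
    intro h0
    obtain ⟨v, hv, hv0⟩ := (Matrix.exists_mulVec_eq_zero_iff).mpr h0
    exact hv (hinj (show (M * Mᵀ).mulVecLin v = (M * Mᵀ).mulVecLin 0 by
      simp only [Matrix.mulVecLin_apply, hv0, Matrix.mulVec_zero]))
  rw [← Matrix.mul_assoc, Matrix.mul_nonsing_inv _ hdet]

lemma key_pow {m n : ℕ} (U : Matrix (Fin m) (Fin n) ℝ) (V D : Matrix (Fin n) (Fin n) ℝ)
    (hU : Uᵀ * U = 1) (hV : Vᵀ * V = 1) (hVVt : V * Vᵀ = 1) (hD : Dᵀ = D) (q : ℕ) :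
    (U * D * Vᵀ) * ((((U * D * Vᵀ)ᵀ * (U * D * Vᵀ)) ^ q) * (U * D * Vᵀ)ᵀ)
      = U * (D ^ (2 * q + 2) * Uᵀ) := by
  have cancelU : ∀ {c : ℕ} (X : Matrix (Fin n) (Fin c) ℝ), Uᵀ * (U * X) = X := by
    intro c X; rw [← Matrix.mul_assoc, hU, Matrix.one_mul]
  have cancelV : ∀ {c : ℕ} (X : Matrix (Fin n) (Fin c) ℝ), Vᵀ * (V * X) = X := by
    intro c X; rw [← Matrix.mul_assoc, hV, Matrix.one_mul]
  have hDl1 : ∀ {c : ℕ} (r : ℕ) (X : Matrix (Fin n) (Fin c) ℝ),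
      D ^ r * (D * X) = D ^ (r + 1) * X := by
    intro c r X; rw [← Matrix.mul_assoc, ← pow_succ]
  have hDl2 : ∀ {c : ℕ} (r : ℕ) (X : Matrix (Fin n) (Fin c) ℝ),
      D * (D ^ r * X) = D ^ (r + 1) * X := by
    intro c r X; rw [← Matrix.mul_assoc, ← pow_succ']
  have hAt : (U * D * Vᵀ)ᵀ = V * (D * Uᵀ) := by
    simp [Matrix.transpose_mul, hD, Matrix.mul_assoc]
  have hAtA : (U * D * Vᵀ)ᵀ * (U * D * Vᵀ) = V * (D * (D * Vᵀ)) := by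
    rw [hAt]
    simp only [Matrix.mul_assoc]
    rw [cancelU]
  have hpow : ∀ r : ℕ, ((U * D * Vᵀ)ᵀ * (U * D * Vᵀ)) ^ r = V * (D ^ (2 * r) * Vᵀ) := by
    intro r
    induction r with
    | zero => simp [hVVt]
    | succ r ih =>
      rw [pow_succ, ih, hAtA]
      simp only [Matrix.mul_assoc]
      simp only [cancelV]
      rw [hDl1, hDl1]
      have : 2 * (r + 1) = 2 * r + 1 + 1 := by ring
      rw [this]
  rw [hpow, hAt]
  simp only [Matrix.mul_assoc]
  simp only [cancelV]
  rw [hDl1, hDl2]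

lemma final_ineq (N B c st : ℝ) (hN1 : 1 ≤ N) (hNB : N ≤ 1 + B) (hcB : c ≤ B)
    (hc0 : 0 ≤ c) (hst : 0 ≤ st) (hB : B = st * st) :
    Real.sqrt (1 - N⁻¹) ≤ st / Real.sqrt (1 + c) := by
  have hNpos : (0:ℝ) < N := lt_of_lt_of_le one_pos hN1
  have hB0 : 0 ≤ B := hB ▸ mul_self_nonneg st
  have h1c : (0:ℝ) < 1 + c := by linarith
  have key : 1 - N⁻¹ ≤ st ^ 2 / (1 + c) := by
    have hinv : (1 + B)⁻¹ ≤ N⁻¹ := by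
      exact inv_anti₀ hNpos hNB
    have e : B / (1 + B) = 1 - (1 + B)⁻¹ := by
      field_simp
      ring
    have h2 : 1 - N⁻¹ ≤ B / (1 + B) := by rw [e]; linarith
    have h3 : B / (1 + B) ≤ B / (1 + c) := by
      gcongr
    have : st ^ 2 = B := by rw [hB]; ring
    rw [this]
    linarith
  calc Real.sqrt (1 - N⁻¹) ≤ Real.sqrt (st ^ 2 / (1 + c)) := Real.sqrt_le_sqrt key
    _ = st / Real.sqrt (1 + c) := by rw [Real.sqrt_div (sq_nonneg st), Real.sqrt_sq hst]

theorem ruqlp_sin_angle_Q_ui_bound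
    (m n k p q : ℕ) (hmn : n ≤ m) (hk1 : 1 ≤ k) (hkn : k < n)
    (d : ℕ) (hd : d = k + p) (hdn : d < n)
    (A U : Matrix (Fin m) (Fin n) ℝ) (V : Matrix (Fin n) (Fin n) ℝ) (σ : Fin n → ℝ)
    (hU : Uᵀ * U = 1) (hV : Vᵀ * V = 1)
    (hσ : Antitone σ) (hσ0 : ∀ i, 0 ≤ σ i)
    (hA : A = U * Matrix.diagonal σ * Vᵀ)
    (hgap : σ ⟨k, hkn⟩ < σ ⟨k - 1, by omega⟩)
    (Φ : Matrix (Fin m) (Fin d) ℝ)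
    (Uk : Matrix (Fin m) (Fin k) ℝ) (hUk : Uk = U.submatrix id (Fin.castLE hkn.le))
    (Uperp : Matrix (Fin m) (Fin (n - k)) ℝ)
    (hUperp : Uperp = U.submatrix id fun i => ⟨k + i.1, by have := i.2; omega⟩)
    (Φ1 : Matrix (Fin k) (Fin d) ℝ) (hΦ1 : Φ1 = Ukᵀ * Φ)
    (Φ2 : Matrix (Fin (n - k)) (Fin d) ℝ) (hΦ2 : Φ2 = Uperpᵀ * Φ)
    (hrank : Φ1.rank = k)
    (Pbar : Matrix (Fin n) (Fin d) ℝ) (hPbar : Pbarᵀ * Pbar = 1)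
    (hPrange : LinearMap.range (Matrix.mulVecLin Pbar)
      = LinearMap.range (Matrix.mulVecLin ((Aᵀ * A) ^ q * Aᵀ * Φ)))
    (Q : Matrix (Fin m) (Fin d) ℝ) (R : Matrix (Fin d) (Fin d) ℝ)
    (hQ : Qᵀ * Q = 1) (hQR : A * Pbar = Q * R)
    (hRtri : ∀ i j : Fin d, j < i → R i j = 0)
    :
    ∀ i : Fin k,
      vecNorm ((1 - Q * Qᵀ).mulVec fun r => U r (Fin.castLE hkn.le i)) ≤
        (σ ⟨k, hkn⟩ / σ (Fin.castLE hkn.le i)) ^ (2 * q + 2) * specNorm (Φ2 * rowPinv Φ1) /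
          Real.sqrt (1 + (σ ⟨n - 1, by omega⟩ / σ ⟨0, by omega⟩) ^ (4 * q + 4) * specNorm (Φ2 * rowPinv Φ1) ^ 2) := by
  intro i
  have hVVt : V * Vᵀ = 1 := mul_eq_one_comm.mp hV
  set i' : Fin n := Fin.castLE hkn.le i with hi'
  have hik : (i' : ℕ) ≤ k - 1 := by
    have := i.2; simp [hi']; omega
  have hσk0 : 0 ≤ σ ⟨k, hkn⟩ := hσ0 _
  have hσi_pos : 0 < σ i' := by
    have h1 : σ ⟨k - 1, by omega⟩ ≤ σ i' := hσ (by simp [Fin.le_def]; omega)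
    exact lt_of_lt_of_le (lt_of_le_of_lt hσk0 hgap) h1
  have hσ0_pos : 0 < σ ⟨0, by omega⟩ :=
    lt_of_lt_of_le hσi_pos (hσ (by simp [Fin.le_def]))
  set E := 2 * q + 2 with hE
  set t := specNorm (Φ2 * rowPinv Φ1) with ht
  have ht0 : 0 ≤ t := norm_nonneg _
  set s := (σ ⟨k, hkn⟩ / σ i') ^ E with hs
  have hs0 : 0 ≤ s := pow_nonneg (div_nonneg hσk0 hσi_pos.le) _
  have hsE : s = σ ⟨k, hkn⟩ ^ E * (σ i' ^ E)⁻¹ := by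
    rw [hs, div_pow, div_eq_mul_inv]
  set c : Fin (n - k) → ℝ := (Φ2 * rowPinv Φ1).mulVec (Pi.single i 1) with hc
  set z : Fin d → ℝ := (σ i' ^ E)⁻¹ • ((rowPinv Φ1).mulVec (Pi.single i 1)) with hz
  set g : Fin n → ℝ := (Uᵀ * Φ).mulVec z with hg
  set h : Fin n → ℝ := fun j => σ j ^ E * g j with hh
  set w : Fin m → ℝ := U.mulVec h with hw
  have hσiE : σ i' ^ E ≠ 0 := pow_ne_zero _ (ne_of_gt hσi_pos)
  have hpinv : Φ1 * rowPinv Φ1 = 1 := full_rank_mul_pinv Φ1 hrank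
  have hΦ1z : Φ1.mulVec z = (σ i' ^ E)⁻¹ • (Pi.single i 1 : Fin k → ℝ) := by
    rw [hz, Matrix.mulVec_smul, Matrix.mulVec_mulVec, hpinv, Matrix.one_mulVec]
  have hΦ2z : Φ2.mulVec z = (σ i' ^ E)⁻¹ • c := by
    rw [hz, hc, Matrix.mulVec_smul, Matrix.mulVec_mulVec]
  have hg1 : ∀ j : Fin k, g (Fin.castLE hkn.le j) = (Φ1.mulVec z) j := by
    intro j
    rw [hg, hΦ1, hUk]
    simp [Matrix.mulVec, Matrix.mul_apply, dotProduct, Matrix.transpose_apply,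
      Matrix.submatrix_apply]
  have hg2 : ∀ j : Fin (n - k), g ⟨k + j.1, by have := j.2; omega⟩ = (Φ2.mulVec z) j := by
    intro j
    rw [hg, hΦ2, hUperp]
    simp [Matrix.mulVec, Matrix.mul_apply, dotProduct, Matrix.transpose_apply,
      Matrix.submatrix_apply]
  have hhk : ∀ j : Fin k, h (Fin.castLE hkn.le j) = if j = i then 1 else 0 := by
    intro j
    rw [hh]
    simp only []
    rw [hg1 j, hΦ1z]
    by_cases hji : j = i
    · subst hji
      simp [Pi.single_apply, hi']
      field_simp
      exact div_self hσiE
    · simp [Pi.single_apply, hji]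
  have hhi : h i' = 1 := by
    have := hhk i
    simpa [hi'] using this
  have hht : ∀ j : Fin (n - k), h ⟨k + j.1, by have := j.2; omega⟩
      = σ ⟨k + j.1, by have := j.2; omega⟩ ^ E * ((σ i' ^ E)⁻¹ * c j) := by
    intro j
    rw [hh]
    simp only []
    rw [hg2 j, hΦ2z]
    simp
  -- dot products via U
  have hUU : ∀ x y : Fin n → ℝ, (U.mulVec x) ⬝ᵥ (U.mulVec y) = x ⬝ᵥ y := by
    intro x y
    rw [dot_mulVec_mulVec, hU, Matrix.one_mulVec]
  have hu : (fun r => U r i') = U.mulVec (Pi.single i' 1) := by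
    funext r
    simp [Matrix.mulVec_single]
  set u : Fin m → ℝ := fun r => U r i' with huDef
  have huu : u ⬝ᵥ u = 1 := by
    rw [hu, hUU, single_dotProduct]
    simp
  have huw : u ⬝ᵥ w = 1 := by
    rw [hu, hw, hUU, single_dotProduct, hhi, one_mul]
  have hwu : w ⬝ᵥ u = 1 := by rw [dotProduct_comm]; exact huw
  have hww : w ⬝ᵥ w = h ⬝ᵥ h := by rw [hw, hUU]
  set N := h ⬝ᵥ h with hN
  have hN1 : 1 ≤ N := by
    have hle := Finset.single_le_sum (f := fun j => h j * h j)
      (fun j _ => mul_self_nonneg _) (Finset.mem_univ i')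
    rw [hN]
    calc (1:ℝ) = h i' * h i' := by rw [hhi]; norm_num
      _ ≤ ∑ j, h j * h j := hle
      _ = h ⬝ᵥ h := rfl
  -- sum split
  have hnk : k + (n - k) = n := by omega
  have hsplit : N = (∑ j : Fin k, h (Fin.castLE hkn.le j) * h (Fin.castLE hkn.le j))
      + ∑ j : Fin (n - k), h ⟨k + j.1, by have := j.2; omega⟩ * h ⟨k + j.1, by have := j.2; omega⟩ := by
    rw [hN]
    have e1 : h ⬝ᵥ h = ∑ j : Fin (k + (n - k)), h (finCongr hnk j) * h (finCongr hnk j) :=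
      (Fintype.sum_equiv (finCongr hnk) _ _ (fun j => rfl)).symm
    rw [e1, Fin.sum_univ_add]
    congr 1
  have hsum1 : (∑ j : Fin k, h (Fin.castLE hkn.le j) * h (Fin.castLE hkn.le j)) = 1 := by
    have : ∀ j : Fin k, h (Fin.castLE hkn.le j) * h (Fin.castLE hkn.le j)
        = if j = i then 1 else 0 := by
      intro j
      rw [hhk j]
      split <;> norm_num
    rw [Finset.sum_congr rfl (fun j _ => this j)]
    simp
  have hcc : c ⬝ᵥ c ≤ t * t := by
    have h1 : vecNorm c ≤ t := by
      have := vecNorm_mulVec_le (Φ2 * rowPinv Φ1) (Pi.single i 1)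
      have hone : vecNorm (Pi.single i (1:ℝ) : Fin k → ℝ) = 1 := by
        have e1 : (∑ j : Fin k, (Pi.single i (1:ℝ) : Fin k → ℝ) j ^ 2) = 1 := by
          simp [Pi.single_apply, ite_pow]
        rw [vecNorm, e1, Real.sqrt_one]
      rw [hc, ht]
      calc vecNorm ((Φ2 * rowPinv Φ1).mulVec (Pi.single i 1))
          ≤ specNorm (Φ2 * rowPinv Φ1) * vecNorm (Pi.single i (1:ℝ)) := this
        _ = specNorm (Φ2 * rowPinv Φ1) := by rw [hone, mul_one]
    have e2 : c ⬝ᵥ c = vecNorm c * vecNorm c := by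
      rw [vecNorm_eq_dot]
      exact (Real.mul_self_sqrt (dot_self_nonneg c)).symm
    rw [e2]
    exact mul_self_le_mul_self (vecNorm_nonneg c) h1
  have hsum2 : (∑ j : Fin (n - k), h ⟨k + j.1, by have := j.2; omega⟩
      * h ⟨k + j.1, by have := j.2; omega⟩) ≤ (s * t) * (s * t) := by
    have hterm : ∀ j : Fin (n - k), h ⟨k + j.1, by have := j.2; omega⟩
        * h ⟨k + j.1, by have := j.2; omega⟩ ≤ (s * s) * (c j * c j) := by
      intro j
      rw [hht j]
      set a := σ ⟨k + j.1, by have := j.2; omega⟩ ^ E with ha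
      set b := σ ⟨k, hkn⟩ ^ E with hb
      have ha0 : 0 ≤ a := pow_nonneg (hσ0 _) _
      have hab : a ≤ b := by
        rw [ha, hb]
        exact pow_le_pow_left₀ (hσ0 _) (hσ (by simp [Fin.le_def])) _
      have hb0 : 0 ≤ b := ha0.trans hab
      have hinv0 : 0 ≤ (σ i' ^ E)⁻¹ := inv_nonneg.mpr (pow_nonneg hσi_pos.le _)
      have haa : a * a ≤ b * b := mul_le_mul hab hab ha0 hb0
      calc a * ((σ i' ^ E)⁻¹ * c j) * (a * ((σ i' ^ E)⁻¹ * c j))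
          = (a * a) * (((σ i' ^ E)⁻¹ * c j) * ((σ i' ^ E)⁻¹ * c j)) := by ring
        _ ≤ (b * b) * (((σ i' ^ E)⁻¹ * c j) * ((σ i' ^ E)⁻¹ * c j)) :=
            mul_le_mul_of_nonneg_right haa (mul_self_nonneg _)
        _ = (s * s) * (c j * c j) := by rw [hsE]; ring
    calc (∑ j : Fin (n - k), h ⟨k + j.1, by have := j.2; omega⟩
        * h ⟨k + j.1, by have := j.2; omega⟩)
        ≤ ∑ j : Fin (n - k), (s * s) * (c j * c j) :=
          Finset.sum_le_sum (fun j _ => hterm j)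
      _ = (s * s) * (c ⬝ᵥ c) := by rw [← Finset.mul_sum]; rfl
      _ ≤ (s * s) * (t * t) := mul_le_mul_of_nonneg_left hcc (mul_nonneg hs0 hs0)
      _ = (s * t) * (s * t) := by ring
  have hN2 : N ≤ 1 + (s * t) * (s * t) := by
    rw [hsplit, hsum1]
    linarith
  -- w is in the range of Q
  have hrangeW : ∃ y, w = Q.mulVec (R.mulVec y) := by
    have hmem : ((Aᵀ * A) ^ q * Aᵀ * Φ).mulVec z
        ∈ LinearMap.range (Matrix.mulVecLin ((Aᵀ * A) ^ q * Aᵀ * Φ)) :=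
      ⟨z, Matrix.mulVecLin_apply _ _⟩
    rw [← hPrange] at hmem
    obtain ⟨y, hy⟩ := hmem
    rw [Matrix.mulVecLin_apply] at hy
    refine ⟨y, ?_⟩
    have hAM : A * ((Aᵀ * A) ^ q * Aᵀ * Φ) = U * (Matrix.diagonal (σ ^ (2 * q + 2)) * (Uᵀ * Φ)) := by
      rw [← Matrix.mul_assoc, hA,
        key_pow U V (Matrix.diagonal σ) hU hV hVVt (Matrix.diagonal_transpose σ) q,
        Matrix.diagonal_pow]
      simp [Matrix.mul_assoc]
    have hhd : (Matrix.diagonal (σ ^ (2 * q + 2))).mulVec ((Uᵀ * Φ).mulVec z) = h := by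
      funext j
      rw [Matrix.mulVec_diagonal]
      simp [hh, hg, hE]
    have h2 : A.mulVec (((Aᵀ * A) ^ q * Aᵀ * Φ).mulVec z) = w := by
      rw [Matrix.mulVec_mulVec, hAM, ← Matrix.mulVec_mulVec, ← Matrix.mulVec_mulVec, hhd]
    rw [← h2, ← hy, Matrix.mulVec_mulVec, hQR, ← Matrix.mulVec_mulVec]
  obtain ⟨y, hyw⟩ := hrangeW
  have hNpos : (0:ℝ) < N := lt_of_lt_of_le one_pos hN1
  have hN0 : N ≠ 0 := ne_of_gt hNpos
  have hQv : Q.mulVec (N⁻¹ • (R.mulVec y)) = N⁻¹ • w := by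
    rw [Matrix.mulVec_smul, ← hyw]
  have hdot : (u - N⁻¹ • w) ⬝ᵥ (u - N⁻¹ • w) = 1 - N⁻¹ := by
    have expand : (u - N⁻¹ • w) ⬝ᵥ (u - N⁻¹ • w)
        = u ⬝ᵥ u - N⁻¹ * (u ⬝ᵥ w) - (N⁻¹ * (w ⬝ᵥ u) - N⁻¹ * (N⁻¹ * (w ⬝ᵥ w))) := by
      simp [sub_dotProduct, dotProduct_sub, smul_dotProduct,
        dotProduct_smul, smul_eq_mul]
      ring
    rw [expand, huu, huw, hwu, hww, inv_mul_cancel₀ hN0]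
    ring
  -- the γ term
  set γp := (σ ⟨n - 1, by omega⟩ / σ ⟨0, by omega⟩) ^ (4 * q + 4) with hγp
  have hγ0 : 0 ≤ γp := pow_nonneg (div_nonneg (hσ0 _) hσ0_pos.le) _
  have hcB : γp * t ^ 2 ≤ (s * t) * (s * t) := by
    have hγle : σ ⟨n - 1, by omega⟩ / σ ⟨0, by omega⟩ ≤ σ ⟨k, hkn⟩ / σ i' := by
      apply div_le_div₀ hσk0 (hσ (by simp [Fin.le_def]; omega)) hσi_pos
        (hσ (by simp [Fin.le_def]))
    have hp : γp ≤ (σ ⟨k, hkn⟩ / σ i') ^ (4 * q + 4) :=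
      pow_le_pow_left₀ (div_nonneg (hσ0 _) hσ0_pos.le) hγle _
    have hss : (σ ⟨k, hkn⟩ / σ i') ^ (4 * q + 4) = s * s := by
      rw [hs, ← pow_add]
      congr 1
      omega
    calc γp * t ^ 2 ≤ (σ ⟨k, hkn⟩ / σ i') ^ (4 * q + 4) * t ^ 2 :=
          mul_le_mul_of_nonneg_right hp (sq_nonneg t)
      _ = (s * t) * (s * t) := by rw [hss]; ring
  have hc0 : 0 ≤ γp * t ^ 2 := mul_nonneg hγ0 (sq_nonneg t)
  have step1 : vecNorm ((1 - Q * Qᵀ).mulVec u) ≤ Real.sqrt (1 - N⁻¹) := by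
    have e3 : vecNorm (u - N⁻¹ • w) = Real.sqrt (1 - N⁻¹) := by
      rw [vecNorm_eq_dot, hdot]
    have := proj_le Q hQ u (N⁻¹ • (R.mulVec y))
    rwa [hQv, e3] at this
  have step2 : Real.sqrt (1 - N⁻¹) ≤ (s * t) / Real.sqrt (1 + γp * t ^ 2) :=
    final_ineq N ((s * t) * (s * t)) (γp * t ^ 2) (s * t) hN1 hN2 hcB hc0
      (mul_nonneg hs0 ht0) rfl
  exact le_trans step1 step2
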